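/- For every integer a ≥ 1, H*(a) = ζ*(2,…,2) (with a twos) equals -2 ζ(overline{2a}), i.e., Σ_{1 ≤ m₁ ≤ … ≤ m_a} 1/(m₁²⋯m_a²) = -2 Σ_{m≥1} (-1)^m/m^{2a}. -/

import Mathlib

open Filter Finset Real

/-- `zeta k` : the Riemann zeta value `ζ(k) = Σ_{m≥1} 1/m^k`, with the convention `ζ(0) = -1/2`. -/
noncomputable def zeta (k : ℕ) : ℝ :=
  if k = 0 then -1/2 else limUnder atTop (fun N => ∑ m ∈ Finset.range N, 1/((m+1 : ℝ))^k)

/-- `zetaA k` : the alternating zeta value `ζ(k̄) = Σ_{m≥1} (-1)^m/m^k`,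
with the convention `ζ(0̄) = -1/2`. -/
noncomputable def zetaA (k : ℕ) : ℝ :=
  if k = 0 then -1/2 else
    limUnder atTop (fun N => ∑ m ∈ Finset.range N, (-1 : ℝ)^(m+1)/((m+1 : ℝ))^k)

/-- `dzeta r s = ζ(r,s) = Σ_{m≥2} (1/m^s) Σ_{j=1}^{m-1} 1/j^r`. -/
noncomputable def dzeta (r s : ℕ) : ℝ :=
  limUnder atTop (fun N => ∑ m ∈ Finset.range N,
    (1/((m+2 : ℝ))^s) * ∑ j ∈ Finset.range (m+1), 1/((j+1 : ℝ))^r)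

/-- `dzetaA1 r s = ζ(r̄,s) = Σ_{m≥2} (1/m^s) Σ_{j=1}^{m-1} (-1)^j/j^r`. -/
noncomputable def dzetaA1 (r s : ℕ) : ℝ :=
  limUnder atTop (fun N => ∑ m ∈ Finset.range N,
    (1/((m+2 : ℝ))^s) * ∑ j ∈ Finset.range (m+1), (-1 : ℝ)^(j+1)/((j+1 : ℝ))^r)

/-- `dzetaA2 r s = ζ(r,s̄) = Σ_{m≥2} ((-1)^m/m^s) Σ_{j=1}^{m-1} 1/j^r`. -/
noncomputable def dzetaA2 (r s : ℕ) : ℝ :=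
  limUnder atTop (fun N => ∑ m ∈ Finset.range N,
    ((-1 : ℝ)^(m+2)/((m+2 : ℝ))^s) * ∑ j ∈ Finset.range (m+1), 1/((j+1 : ℝ))^r)

/-- `dzetaA3 r s = ζ(r̄,s̄) = Σ_{m≥2} ((-1)^m/m^s) Σ_{j=1}^{m-1} (-1)^j/j^r`. -/
noncomputable def dzetaA3 (r s : ℕ) : ℝ :=
  limUnder atTop (fun N => ∑ m ∈ Finset.range N,
    ((-1 : ℝ)^(m+2)/((m+2 : ℝ))^s) * ∑ j ∈ Finset.range (m+1), (-1 : ℝ)^(j+1)/((j+1 : ℝ))^r)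

/-- Multiple zeta star value `ζ*(k₁,…,k_n) = Σ_{1 ≤ m₁ ≤ … ≤ m_n} ∏ 1/m_i^{k_i}`. -/
noncomputable def mzvStar (n : ℕ) (k : Fin n → ℕ) : ℝ :=
  ∑' m : {f : Fin n → ℕ+ // Monotone f}, ∏ i, (1 : ℝ)/((m.1 i : ℝ))^(k i)

/-- Multiple zeta value `ζ(k₁,…,k_n) = Σ_{1 ≤ m₁ < … < m_n} ∏ 1/m_i^{k_i}`. -/
noncomputable def mzv (n : ℕ) (k : Fin n → ℕ) : ℝ :=
  ∑' m : {f : Fin n → ℕ+ // StrictMono f}, ∏ i, (1 : ℝ)/((m.1 i : ℝ))^(k i)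

/-- The exponent string `(2,…,2,3,2,…,2)` with `a` twos before the `3` and `b` twos after. -/
def expo232 (a b : ℕ) : Fin (a+b+1) → ℕ := fun i => if (i : ℕ) = a then 3 else 2

/-- `H*(a,b) = ζ*(2^a, 3, 2^b)`. -/
noncomputable def Hstar (a b : ℕ) : ℝ := mzvStar (a+b+1) (expo232 a b)

/-- `H*(n) = ζ*(2^n)` (so `H*(0) = 1`). -/
noncomputable def HstarN (n : ℕ) : ℝ := mzvStar n (fun _ => 2)

/-- `H(a,b) = ζ(2^a, 3, 2^b)`. -/
noncomputable def Hmzv (a b : ℕ) : ℝ := mzv (a+b+1) (expo232 a b)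

/-- `H(n) = ζ(2^n)` (so `H(0) = 1`). -/
noncomputable def HmzvN (n : ℕ) : ℝ := mzv n (fun _ => 2)


section AuxHstarNEq

open Topology


noncomputable def cc (n m : ℕ) : ℝ := ∏ j ∈ Finset.range m, ((n:ℝ) - j)/((n:ℝ) + j + 1)

lemma cc_zero (n : ℕ) : cc n 0 = 1 := by simp [cc]

lemma cc_succ (n m : ℕ) : cc n (m+1) = cc n m * (((n:ℝ) - m)/((n:ℝ) + m + 1)) := by
  unfold cc; rw [Finset.prod_range_succ]

lemma cc_eq_zero {n m : ℕ} (h : n < m) : cc n m = 0 := by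
  apply Finset.prod_eq_zero (Finset.mem_range.2 h)
  simp

lemma abs_cc_le_one (n m : ℕ) : |cc n m| ≤ 1 := by
  induction m with
  | zero => simp [cc_zero]
  | succ m ih =>
    rw [cc_succ, abs_mul]
    have h1 : |((n:ℝ) - m)/((n:ℝ) + m + 1)| ≤ 1 := by
      rw [abs_div, div_le_one (by positivity)]
      have : |((n:ℝ) + m + 1)| = (n:ℝ) + m + 1 := abs_of_pos (by positivity)
      rw [this]
      calc |((n:ℝ) - m)| ≤ |(n:ℝ)| + |(m:ℝ)| := abs_sub _ _
        _ ≤ (n:ℝ) + m + 1 := by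
            rw [abs_of_nonneg (by positivity), abs_of_nonneg (by positivity)]; linarith
    exact mul_le_one₀ ih (abs_nonneg _) h1

lemma cc_diff (n m : ℕ) :
    cc (n+1) m * (((n:ℝ)+1)^2 - (m:ℝ)^2) = cc n m * ((n:ℝ)+1)^2 := by
  induction m with
  | zero => simp [cc_zero]
  | succ m ih =>
    rw [cc_succ, cc_succ]
    have h1 : ((n:ℝ) + m + 1) ≠ 0 := by positivity
    have h2 : (((n:ℕ)+1:ℕ):ℝ) + m + 1 ≠ 0 := by positivity
    push_cast at *
    field_simp at *
    ring_nf at *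
    nlinarith [ih]

lemma cc_choose (n m : ℕ) :
    cc n m * (Nat.choose (2*n) n : ℝ) = (Nat.choose (2*n) (n+m) : ℝ) := by
  induction m with
  | zero => simp [cc]
  | succ m ih =>
    rw [cc_succ]
    have hre : cc n m * (((n:ℝ) - m)/((n:ℝ) + m + 1)) * (Nat.choose (2*n) n : ℝ)
        = (cc n m * (Nat.choose (2*n) n : ℝ)) * (((n:ℝ) - m)/((n:ℝ) + m + 1)) := by ring
    rw [hre, ih]
    rcases le_or_gt m n with h | h
    · have hc := Nat.choose_succ_right_eq (2*n) (n+m)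
      have hsub : 2*n - (n+m) = n - m := by omega
      rw [hsub] at hc
      have hcast : ((Nat.choose (2*n) (n+m+1) : ℝ)) * ((n:ℝ)+m+1)
          = (Nat.choose (2*n) (n+m) : ℝ) * ((n:ℝ) - m) := by
        have := congrArg (fun k : ℕ => (k : ℝ)) hc
        push_cast at this
        rw [Nat.cast_sub h] at this
        push_cast at this
        convert this using 2 <;> push_cast <;> ring
      have hne : ((n:ℝ)+m+1) ≠ 0 := by positivity
      have : (n:ℕ)+m+1 = n + (m+1) := by omega
      rw [← this]
      field_simp
      linarith [hcast]
    · have h1 : Nat.choose (2*n) (n+m) = 0 := Nat.choose_eq_zero_of_lt (by omega)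
      have h2 : Nat.choose (2*n) (n+(m+1)) = 0 := Nat.choose_eq_zero_of_lt (by omega)
      rw [h1, h2]
      simp

lemma binom_alt (N : ℕ) (hN : 1 ≤ N) :
    2 * ∑ m ∈ Finset.range N, (-1:ℝ)^m * (Nat.choose (2*N) (N+1+m) : ℝ)
      = (Nat.choose (2*N) N : ℝ) := by
  set f : ℕ → ℝ := fun i => (-1:ℝ)^i * (Nat.choose (2*N) i : ℝ) with hf
  have h0 : ∑ i ∈ Finset.range (2*N+1), f i = 0 := by
    have h := Int.alternating_sum_range_choose_of_ne (n := 2*N) (by omega)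
    have := congrArg (fun z : ℤ => (z : ℝ)) h
    push_cast at this
    simpa [hf] using this
  have hreflect : ∑ i ∈ Finset.range N, f (N+1+i) = ∑ i ∈ Finset.range N, f i := by
    rw [← Finset.sum_range_reflect (fun i => f (N+1+i)) N]
    apply Finset.sum_congr rfl
    intro j hj
    rw [Finset.mem_range] at hj
    have h1 : N+1+(N-1-j) = 2*N - j := by omega
    rw [h1, hf]
    simp only
    have hch : Nat.choose (2*N) (2*N - j) = Nat.choose (2*N) j :=
      Nat.choose_symm (by omega)
    rw [hch]
    congr 1
    have h4 : (-1:ℝ)^(2*N - j) * (-1:ℝ)^j = 1 := by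
      rw [← pow_add, (by omega : 2*N - j + j = 2*N), pow_mul]; simp
    have h5 : (-1:ℝ)^j * (-1:ℝ)^j = 1 := by
      rw [← pow_add, (by ring : j + j = 2*j), pow_mul]; simp
    calc (-1:ℝ)^(2*N-j) = (-1:ℝ)^(2*N-j) * ((-1:ℝ)^j * (-1:ℝ)^j) := by rw [h5, mul_one]
      _ = ((-1:ℝ)^(2*N-j) * (-1:ℝ)^j) * (-1:ℝ)^j := by ring
      _ = (-1:ℝ)^j := by rw [h4, one_mul]
  have hsplit : ∑ i ∈ Finset.range (2*N+1), f i
      = ∑ i ∈ Finset.range N, f i + (f N + ∑ i ∈ Finset.range N, f (N+1+i)) := by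
    have h2 : 2*N+1 = N + (N+1) := by omega
    rw [h2, Finset.sum_range_add, Finset.sum_range_succ']
    congr 1
    have e1 : ∑ i ∈ Finset.range N, f (N + (i+1)) = ∑ i ∈ Finset.range N, f (N+1+i) :=
      Finset.sum_congr rfl (fun i _ => by rw [show N+(i+1) = N+1+i by omega])
    rw [e1, Nat.add_zero]
    exact add_comm _ _
  rw [hreflect] at hsplit
  rw [hsplit] at h0
  -- h0 : 2 * A + f N = 0 with A = ∑ range N f
  have hA : ∑ i ∈ Finset.range N, f i = -(f N) / 2 := by linarith
  have hterm : ∀ m, (-1:ℝ)^m * (Nat.choose (2*N) (N+1+m) : ℝ) = (-1:ℝ)^(N+1) * f (N+1+m) := by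
    intro m
    rw [hf]
    simp only
    have : (-1:ℝ)^(N+1) * (-1:ℝ)^(N+1+m) = (-1:ℝ)^m := by
      rw [← pow_add]
      have h3 : (N+1) + (N+1+m) = 2*(N+1) + m := by ring
      rw [h3, pow_add, pow_mul]
      simp
    rw [← this]; ring
  rw [Finset.sum_congr rfl (fun m _ => hterm m), ← Finset.mul_sum, hreflect, hA, hf]
  simp only
  have : (-1:ℝ)^(N+1) * (-1:ℝ)^N = -1 := by
    rw [← pow_add]
    have h3 : (N+1) + N = 2*N + 1 := by ring
    rw [h3, pow_add, pow_mul]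
    simp
  nlinarith [this]

lemma key0 (n : ℕ) : 2 * ∑ m ∈ Finset.range (n+1), (-1:ℝ)^m * cc (n+1) (m+1) = 1 := by
  set N := n+1 with hNdef
  have hC : (0:ℝ) < (Nat.choose (2*N) N : ℝ) := by
    exact_mod_cast Nat.choose_pos (by omega)
  have hpt : ∀ m, ((-1:ℝ)^m * cc N (m+1)) * (Nat.choose (2*N) N : ℝ)
      = (-1:ℝ)^m * (Nat.choose (2*N) (N+1+m) : ℝ) := by
    intro m
    rw [mul_assoc, cc_choose, show N+(m+1) = N+1+m by omega]
  have hmul : (2 * ∑ m ∈ Finset.range N, (-1:ℝ)^m * cc N (m+1)) * (Nat.choose (2*N) N : ℝ)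
      = 1 * (Nat.choose (2*N) N : ℝ) := by
    calc (2 * ∑ m ∈ Finset.range N, (-1:ℝ)^m * cc N (m+1)) * (Nat.choose (2*N) N : ℝ)
        = 2 * ∑ m ∈ Finset.range N, ((-1:ℝ)^m * cc N (m+1)) * (Nat.choose (2*N) N : ℝ) := by
          rw [mul_assoc, Finset.sum_mul]
      _ = 2 * ∑ m ∈ Finset.range N, (-1:ℝ)^m * (Nat.choose (2*N) (N+1+m) : ℝ) := by
          rw [Finset.sum_congr rfl (fun m _ => hpt m)]
      _ = (Nat.choose (2*N) N : ℝ) := binom_alt N (by omega)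
      _ = 1 * (Nat.choose (2*N) N : ℝ) := by rw [one_mul]
  exact mul_right_cancel₀ (ne_of_gt hC) hmul

noncomputable def T : ℕ → ℕ → ℝ
  | 0, _ => 1
  | a+1, n => ∑ k ∈ Finset.range n, (1/((k:ℝ)+1)^2) * T a (k+1)

lemma T_one : ∀ a, T a 1 = 1 := by
  intro a
  induction a with
  | zero => rfl
  | succ a ih => show ∑ k ∈ Finset.range 1, (1/((k:ℝ)+1)^2) * T a (k+1) = 1; simp [ih]

lemma keyT : ∀ a n, T a (n+1)
    = 2 * ∑ m ∈ Finset.range (n+1), (-1:ℝ)^m * cc (n+1) (m+1) / ((m:ℝ)+1)^(2*a) := by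
  intro a
  induction a with
  | zero =>
    intro n
    show (1:ℝ) = _
    have hs : ∀ m ∈ Finset.range (n+1), (-1:ℝ)^m * cc (n+1) (m+1) / ((m:ℝ)+1)^(2*0)
        = (-1:ℝ)^m * cc (n+1) (m+1) := by
      intro m _
      norm_num
    rw [Finset.sum_congr rfl hs]
    exact (key0 n).symm
  | succ a iha =>
    intro n
    induction n with
    | zero =>
      rw [T_one]
      have h1 : cc 1 1 = 1/2 := by
        show (∏ j ∈ Finset.range 1, (((1:ℕ):ℝ) - j)/(((1:ℕ):ℝ) + j + 1)) = 1/2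
        norm_num
      simp [h1]
    | succ n ihn =>
      have hT : T (a+1) (n+2) = T (a+1) (n+1) + (1/((n:ℝ)+1+1)^2) * T a (n+1+1) := by
        show ∑ k ∈ Finset.range (n+2), (1/((k:ℝ)+1)^2) * T a (k+1) = _
        rw [Finset.sum_range_succ]
        push_cast
        congr 1
      rw [hT, ihn, iha (n+1)]
      have hext : (∑ m ∈ Finset.range (n+1+1), (-1:ℝ)^m * cc (n+1) (m+1) / ((m:ℝ)+1)^(2*(a+1)))
          = ∑ m ∈ Finset.range (n+1), (-1:ℝ)^m * cc (n+1) (m+1) / ((m:ℝ)+1)^(2*(a+1)) := by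
        rw [Finset.sum_range_succ, cc_eq_zero (show n+1 < n+1+1 by omega)]
        simp
      rw [← hext]
      have hgoal : ∀ m ∈ Finset.range (n+1+1),
          2 * ((-1:ℝ)^m * cc (n+1) (m+1) / ((m:ℝ)+1)^(2*(a+1)))
            + (1/((n:ℝ)+1+1)^2) * (2 * ((-1:ℝ)^m * cc (n+1+1) (m+1) / ((m:ℝ)+1)^(2*a)))
          = 2 * ((-1:ℝ)^m * cc (n+1+1) (m+1) / ((m:ℝ)+1)^(2*(a+1))) := by
        intro m _
        have hd := cc_diff (n+1) (m+1)
        push_cast at hd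
        have hp1 : ((m:ℝ)+1) ≠ 0 := by positivity
        have hp2 : ((n:ℝ)+1+1) ≠ 0 := by positivity
        have hpow : ((m:ℝ)+1)^(2*(a+1)) = ((m:ℝ)+1)^(2*a) * ((m:ℝ)+1)^2 := by
          rw [show 2*(a+1) = 2*a+2 by ring, pow_add]
        have hP : ((m:ℝ)+1)^(2*a) ≠ 0 := by positivity
        rw [hpow]
        have hcore : 2 * (cc (n+1) (m+1) / (((m:ℝ)+1)^(2*a) * ((m:ℝ)+1)^2))
            + (1/(((n:ℝ)+1+1)^2)) * (2 * (cc (n+1+1) (m+1) / ((m:ℝ)+1)^(2*a)))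
            = 2 * (cc (n+1+1) (m+1) / (((m:ℝ)+1)^(2*a) * ((m:ℝ)+1)^2)) := by
          have hc1 : cc (n+1) (m+1) = cc (n+1+1) (m+1)
              - cc (n+1+1) (m+1) * ((m:ℝ)+1)^2 / ((n:ℝ)+1+1)^2 := by
            rw [eq_sub_iff_add_eq]
            field_simp
            linear_combination -hd
          rw [hc1]
          field_simp
          ring
        calc 2 * ((-1:ℝ)^m * cc (n+1) (m+1) / (((m:ℝ)+1)^(2*a) * ((m:ℝ)+1)^2))
              + (1/((n:ℝ)+1+1)^2) * (2 * ((-1:ℝ)^m * cc (n+1+1) (m+1) / ((m:ℝ)+1)^(2*a)))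
            = (-1:ℝ)^m * (2 * (cc (n+1) (m+1) / (((m:ℝ)+1)^(2*a) * ((m:ℝ)+1)^2))
              + (1/(((n:ℝ)+1+1)^2)) * (2 * (cc (n+1+1) (m+1) / ((m:ℝ)+1)^(2*a)))) := by ring
          _ = (-1:ℝ)^m * (2 * (cc (n+1+1) (m+1) / (((m:ℝ)+1)^(2*a) * ((m:ℝ)+1)^2))) := by
              rw [hcore]
          _ = 2 * ((-1:ℝ)^m * cc (n+1+1) (m+1) / (((m:ℝ)+1)^(2*a) * ((m:ℝ)+1)^2)) := by ring
      have key := Finset.sum_congr rfl hgoal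
      simp only [Finset.sum_add_distrib, ← Finset.mul_sum] at key
      linarith [key]

lemma T_key (a : ℕ) (ha : 1 ≤ a) (n : ℕ) :
    T a n = 2 * ∑ m ∈ Finset.range n, (-1:ℝ)^m * cc n (m+1) / ((m:ℝ)+1)^(2*a) := by
  cases n with
  | zero =>
    obtain ⟨b, rfl⟩ : ∃ b, a = b + 1 := ⟨a - 1, by omega⟩
    show (∑ k ∈ Finset.range 0, (1/((k:ℝ)+1)^2) * T b (k+1)) = _
    simp
  | succ n => exact keyT a n

open scoped Classical

noncomputable def gfun (a : ℕ) (x : Fin a → ℕ+) : ℝ := ∏ i, (1:ℝ)/((x i : ℝ))^(2:ℕ)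

noncomputable def gB (a n : ℕ) (x : Fin a → ℕ+) : ℝ :=
  if Monotone x ∧ ∀ i, (x i : ℕ) ≤ n then gfun a x else 0

noncomputable def gInd (a : ℕ) (x : Fin a → ℕ+) : ℝ :=
  if Monotone x then gfun a x else 0

lemma gfun_nonneg (a : ℕ) (x : Fin a → ℕ+) : 0 ≤ gfun a x :=
  Finset.prod_nonneg fun i _ => by positivity

lemma gB_nonneg (a n : ℕ) (x : Fin a → ℕ+) : 0 ≤ gB a n x := by
  unfold gB; split_ifs
  · exact gfun_nonneg a x
  · exact le_refl _

lemma gB_le (a n : ℕ) (x : Fin a → ℕ+) : gB a n x ≤ gfun a x := by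
  unfold gB; split_ifs
  · exact le_refl _
  · exact gfun_nonneg a x

lemma summable_pnat : Summable (fun m : ℕ+ => (1:ℝ)/((m:ℝ))^(2:ℕ)) := by
  have h : Summable (fun n : ℕ => (1:ℝ)/(n:ℝ)^(2:ℕ)) := summable_one_div_nat_pow.2 one_lt_two
  exact h.comp_injective PNat.coe_injective

lemma gfun_snoc (a : ℕ) (y : Fin a → ℕ+) (m : ℕ+) :
    gfun (a+1) (Fin.snoc y m) = ((1:ℝ)/((m:ℝ))^(2:ℕ)) * gfun a y := by
  unfold gfun
  have h : (fun i => (1:ℝ)/(((Fin.snoc y m : Fin (a+1) → ℕ+) i : ℝ))^(2:ℕ))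
      = Fin.snoc (fun i => (1:ℝ)/((y i : ℝ))^(2:ℕ)) ((1:ℝ)/((m:ℝ))^(2:ℕ)) := by
    have := Fin.comp_snoc (fun t : ℕ+ => (1:ℝ)/((t:ℝ))^(2:ℕ)) y m
    exact this
  calc (∏ i, (1:ℝ)/(((Fin.snoc y m : Fin (a+1) → ℕ+) i : ℝ))^(2:ℕ))
      = ∏ i, (Fin.snoc (fun i => (1:ℝ)/((y i : ℝ))^(2:ℕ)) ((1:ℝ)/((m:ℝ))^(2:ℕ)) : Fin (a+1) → ℝ) i := by rw [h]
    _ = (∏ i, (1:ℝ)/((y i : ℝ))^(2:ℕ)) * ((1:ℝ)/((m:ℝ))^(2:ℕ)) := Fin.prod_snoc _ _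
    _ = _ := mul_comm _ _

lemma summable_gfun : ∀ a, Summable (gfun a) := by
  intro a
  induction a with
  | zero => exact Summable.of_finite
  | succ a ih =>
    set e := Fin.snocEquiv (fun _ : Fin (a+1) => ℕ+) with he
    rw [← e.summable_iff]
    have heq : (gfun (a+1)) ∘ e
        = fun p : ℕ+ × (Fin a → ℕ+) => ((1:ℝ)/((p.1:ℝ))^(2:ℕ)) * gfun a p.2 := by
      funext p
      show gfun (a+1) (Fin.snoc p.2 p.1) = _
      exact gfun_snoc a p.2 p.1
    rw [heq]
    exact summable_pnat.mul_of_nonneg ih (fun m => by positivity) (fun y => gfun_nonneg a y)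

lemma monotone_snoc_iff {a : ℕ} (y : Fin a → ℕ+) (m : ℕ+) :
    Monotone (Fin.snoc y m : Fin (a+1) → ℕ+) ↔ Monotone y ∧ ∀ i, y i ≤ m := by
  constructor
  · intro h
    constructor
    · intro i j hij
      have h2 := h (show (i.castSucc : Fin (a+1)) ≤ j.castSucc by
        rwa [Fin.castSucc_le_castSucc_iff])
      simpa [Fin.snoc_castSucc] using h2
    · intro i
      have h2 := h (show (i.castSucc : Fin (a+1)) ≤ Fin.last a from Fin.le_last _)
      simpa [Fin.snoc_castSucc, Fin.snoc_last] using h2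
  · rintro ⟨hm, hb⟩
    rw [Fin.monotone_iff_le_succ]
    intro i
    rcases Fin.eq_castSucc_or_eq_last i.succ with ⟨j, hj⟩ | hj
    · rw [hj, Fin.snoc_castSucc, Fin.snoc_castSucc]
      apply hm
      have h3 : i.castSucc ≤ i.succ := Fin.castSucc_lt_succ.le
      rw [hj] at h3
      exact Fin.castSucc_le_castSucc_iff.1 h3
    · rw [hj, Fin.snoc_castSucc, Fin.snoc_last]
      exact hb i

lemma gB_snoc (a n : ℕ) (y : Fin a → ℕ+) (m : ℕ+) :
    gB (a+1) n (Fin.snoc y m)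
      = if (m:ℕ) ≤ n then ((1:ℝ)/((m:ℝ))^(2:ℕ)) * gB a (m:ℕ) y else 0 := by
  have hC : (Monotone (Fin.snoc y m : Fin (a+1) → ℕ+)
        ∧ ∀ i : Fin (a+1), ((Fin.snoc y m : Fin (a+1) → ℕ+) i : ℕ) ≤ n)
      ↔ ((m:ℕ) ≤ n ∧ (Monotone y ∧ ∀ i, (y i : ℕ) ≤ (m:ℕ))) := by
    constructor
    · rintro ⟨hmo, hb⟩
      have h2 := (monotone_snoc_iff y m).1 hmo
      refine ⟨?_, h2.1, fun i => ?_⟩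
      · have h3 := hb (Fin.last a)
        rwa [Fin.snoc_last] at h3
      · exact_mod_cast h2.2 i
    · rintro ⟨h1, h2, h3⟩
      refine ⟨(monotone_snoc_iff y m).2 ⟨h2, fun i => ?_⟩, fun i => ?_⟩
      · exact_mod_cast h3 i
      · rcases Fin.eq_castSucc_or_eq_last i with ⟨j, rfl⟩ | rfl
        · rw [Fin.snoc_castSucc]; exact le_trans (h3 j) h1
        · rw [Fin.snoc_last]; exact h1
  unfold gB
  rw [if_congr hC rfl rfl]
  by_cases h1 : (m:ℕ) ≤ n
  · by_cases h2 : Monotone y ∧ ∀ i, (y i : ℕ) ≤ (m:ℕ)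
    · rw [if_pos ⟨h1, h2⟩, if_pos h1, if_pos h2, gfun_snoc]
    · rw [if_neg (by tauto), if_pos h1, if_neg h2, mul_zero]
  · rw [if_neg (by tauto), if_neg h1]

lemma tsum_gB : ∀ a n, (∑' x : Fin a → ℕ+, gB a n x) = T a n := by
  intro a
  induction a with
  | zero =>
    intro n
    have hval : ∀ x : Fin 0 → ℕ+, gB 0 n x = 1 := by
      intro x
      have hmono : Monotone x := fun i => i.elim0
      have : (Monotone x ∧ ∀ i : Fin 0, (x i : ℕ) ≤ n) := ⟨hmono, fun i => i.elim0⟩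
      rw [gB, if_pos this]
      unfold gfun
      simp
    rw [show (fun x : Fin 0 → ℕ+ => gB 0 n x) = fun _ => (1:ℝ) from funext hval]
    rw [tsum_eq_single default (fun b hb => absurd (Subsingleton.elim b default) hb)]
    rfl
  | succ a ih =>
    intro n
    set e := Fin.snocEquiv (fun _ : Fin (a+1) => ℕ+) with he
    rw [← e.tsum_eq (gB (a+1) n)]
    have hsum : Summable (fun p : ℕ+ × (Fin a → ℕ+) => gB (a+1) n (e p)) := by
      have h1 : Summable ((gfun (a+1)) ∘ e) := e.summable_iff.2 (summable_gfun (a+1))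
      exact Summable.of_nonneg_of_le (fun p => gB_nonneg (a+1) n (e p))
        (fun p => gB_le (a+1) n (e p)) h1
    rw [Summable.tsum_prod' hsum (fun m => hsum.prod_factor m)]
    have hinner : ∀ m : ℕ+,
        (∑' y : Fin a → ℕ+, gB (a+1) n (e (m, y)))
          = if (m:ℕ) ≤ n then ((1:ℝ)/((m:ℝ))^(2:ℕ)) * T a (m:ℕ) else 0 := by
      intro m
      have h1 : ∀ y : Fin a → ℕ+, gB (a+1) n (e (m, y))
          = if (m:ℕ) ≤ n then ((1:ℝ)/((m:ℝ))^(2:ℕ)) * gB a (m:ℕ) y else 0 := by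
        intro y
        exact gB_snoc a n y m
      rw [tsum_congr h1]
      by_cases hc : (m:ℕ) ≤ n
      · simp only [if_pos hc]
        rw [tsum_mul_left, ih (m:ℕ)]
      · simp only [if_neg hc, tsum_zero]
    rw [tsum_congr hinner]
    rw [← Equiv.pnatEquivNat.symm.tsum_eq]
    have hFk : ∀ k : ℕ,
        (if ((Equiv.pnatEquivNat.symm k : ℕ+) : ℕ) ≤ n
          then ((1:ℝ)/(((Equiv.pnatEquivNat.symm k : ℕ+):ℝ))^(2:ℕ)) * T a ((Equiv.pnatEquivNat.symm k : ℕ+):ℕ) else 0)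
        = if k+1 ≤ n then (1/((k:ℝ)+1)^2) * T a (k+1) else 0 := by
      intro k
      have h2 : ((Equiv.pnatEquivNat.symm k : ℕ+) : ℕ) = k+1 := by
        simp [Equiv.pnatEquivNat]
      rw [h2]
      by_cases hc : k+1 ≤ n
      · rw [if_pos hc, if_pos hc]
        congr 2
        push_cast
        ring
      · rw [if_neg hc, if_neg hc]
    rw [tsum_congr hFk]
    rw [tsum_eq_sum (s := Finset.range n)
      (by intro k hk; rw [if_neg]; rw [Finset.mem_range] at hk; omega)]
    show _ = ∑ k ∈ Finset.range n, (1/((k:ℝ)+1)^2) * T a (k+1)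
    apply Finset.sum_congr rfl
    intro k hk
    rw [Finset.mem_range] at hk
    rw [if_pos (by omega)]

lemma tendsto_gB (a : ℕ) :
    Tendsto (fun n => ∑' x : Fin a → ℕ+, gB a n x) atTop
      (𝓝 (∑' x : Fin a → ℕ+, gInd a x)) := by
  apply tendsto_tsum_of_dominated_convergence (bound := gfun a) (summable_gfun a)
  · intro x
    have hev : ∀ᶠ n in atTop, gB a n x = gInd a x := by
      filter_upwards [eventually_ge_atTop (Finset.univ.sup (fun i => (x i : ℕ)))] with n hn
      unfold gB gInd
      have hb : ∀ i, (x i : ℕ) ≤ n := fun i =>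
        le_trans (Finset.le_sup (f := fun i => (x i : ℕ)) (Finset.mem_univ i)) hn
      by_cases hm : Monotone x
      · rw [if_pos ⟨hm, hb⟩, if_pos hm]
      · rw [if_neg (by tauto), if_neg hm]
    exact Tendsto.congr' (hev.mono fun n h => h.symm) tendsto_const_nhds
  · apply Filter.Eventually.of_forall
    intro n x
    rw [Real.norm_eq_abs, abs_of_nonneg (gB_nonneg a n x)]
    exact gB_le a n x

lemma HstarN_eq_tsum (a : ℕ) : HstarN a = ∑' x : Fin a → ℕ+, gInd a x := by
  have h0 : HstarN a = ∑' x : {f : Fin a → ℕ+ | Monotone f}, gfun a x := rfl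
  rw [h0, _root_.tsum_subtype]
  apply tsum_congr
  intro x
  rw [Set.indicator_apply]
  unfold gInd
  simp only [Set.mem_setOf_eq]

lemma tendsto_T (a : ℕ) : Tendsto (fun n => T a n) atTop (𝓝 (HstarN a)) := by
  have h := tendsto_gB a
  rw [← HstarN_eq_tsum a] at h
  exact h.congr (fun n => tsum_gB a n)

noncomputable def fS (a n m : ℕ) : ℝ := 2 * ((-1:ℝ)^m * cc n (m+1) / ((m:ℝ)+1)^(2*a))

lemma tsum_fS (a n : ℕ) :
    (∑' m : ℕ, fS a n m) = 2 * ∑ m ∈ Finset.range n, (-1:ℝ)^m * cc n (m+1) / ((m:ℝ)+1)^(2*a) := by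
  rw [tsum_eq_sum (s := Finset.range n) (by
    intro m hm
    rw [Finset.mem_range] at hm
    unfold fS
    rw [cc_eq_zero (show n < m+1 by omega)]
    ring)]
  rw [Finset.mul_sum]
  exact Finset.sum_congr rfl (fun i _ => rfl)

lemma summable_bound (a : ℕ) (ha : 1 ≤ a) :
    Summable (fun m : ℕ => 2 * ((1:ℝ)/((m:ℝ)+1)^(2*a))) := by
  have h : Summable (fun n : ℕ => (1:ℝ)/(n:ℝ)^(2*a)) :=
    summable_one_div_nat_pow.2 (by omega)
  have h2 := (summable_nat_add_iff 1).2 h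
  have h3 : Summable (fun m : ℕ => (1:ℝ)/((m:ℝ)+1)^(2*a)) := by
    apply h2.congr
    intro m
    push_cast
    ring
  exact h3.mul_left 2

lemma tendsto_cc (m : ℕ) : Tendsto (fun n : ℕ => cc n m) atTop (𝓝 1) := by
  have h : ∀ j : ℕ, Tendsto (fun n : ℕ => ((n:ℝ) - j)/((n:ℝ) + j + 1)) atTop (𝓝 1) := by
    intro j
    have hden : Tendsto (fun n : ℕ => (n:ℝ) + j + 1) atTop atTop := by
      have := tendsto_natCast_atTop_atTop (R := ℝ)
      have h2 := tendsto_atTop_add_const_right atTop ((j:ℝ) + 1) this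
      exact h2.congr (fun n => by ring)
    have h0 : Tendsto (fun n : ℕ => (2*(j:ℝ)+1)/((n:ℝ) + j + 1)) atTop (𝓝 0) :=
      Tendsto.div_atTop tendsto_const_nhds hden
    have heq : ∀ n : ℕ, ((n:ℝ) - j)/((n:ℝ) + j + 1) = 1 - (2*(j:ℝ)+1)/((n:ℝ) + j + 1) := by
      intro n
      have hne : (n:ℝ) + j + 1 ≠ 0 := by positivity
      field_simp
      ring
    have := (tendsto_const_nhds (x := (1:ℝ)) (f := atTop (α := ℕ))).sub h0
    rw [sub_zero] at this
    exact Tendsto.congr (fun n => (heq n).symm) this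
  have hprod := tendsto_finset_prod (Finset.range m)
    (fun j (_ : j ∈ Finset.range m) => h j)
  simp only [Finset.prod_const_one] at hprod
  exact hprod

lemma tendsto_fS (a : ℕ) (ha : 1 ≤ a) :
    Tendsto (fun n => ∑' m : ℕ, fS a n m) atTop
      (𝓝 (∑' m : ℕ, 2 * ((-1:ℝ)^m/((m:ℝ)+1)^(2*a)))) := by
  apply tendsto_tsum_of_dominated_convergence
    (bound := fun m : ℕ => 2 * ((1:ℝ)/((m:ℝ)+1)^(2*a))) (summable_bound a ha)
  · intro m
    have hcc := tendsto_cc (m+1)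
    have hc := hcc.const_mul ((2:ℝ) * (-1)^m / ((m:ℝ)+1)^(2*a))
    rw [mul_one] at hc
    have hval : 2 * ((-1:ℝ)^m/((m:ℝ)+1)^(2*a)) = (2:ℝ) * (-1)^m / ((m:ℝ)+1)^(2*a) := by ring
    rw [hval]
    apply Tendsto.congr _ hc
    intro n
    unfold fS
    ring
  · apply Filter.Eventually.of_forall
    intro n m
    unfold fS
    rw [Real.norm_eq_abs]
    have hD : (0:ℝ) < ((m:ℝ)+1)^(2*a) := by positivity
    calc |2 * ((-1:ℝ)^m * cc n (m+1) / ((m:ℝ)+1)^(2*a))|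
        = 2 * (|cc n (m+1)| / ((m:ℝ)+1)^(2*a)) := by
          rw [abs_mul, abs_div, abs_mul, abs_pow, abs_neg, abs_one, one_pow, one_mul,
            abs_of_pos hD]
          norm_num
      _ ≤ 2 * (1 / ((m:ℝ)+1)^(2*a)) := by
          apply mul_le_mul_of_nonneg_left _ (by norm_num)
          exact (div_le_div_iff_of_pos_right hD).2 (abs_cc_le_one n (m+1))

lemma summable_alt (a : ℕ) (ha : 1 ≤ a) :
    Summable (fun m : ℕ => (-1:ℝ)^(m+1)/((m:ℝ)+1)^(2*a)) := by
  apply Summable.of_abs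
  have h3 := (summable_bound a ha).mul_left (1/2)
  apply h3.congr
  intro m
  have hD : (0:ℝ) < ((m:ℝ)+1)^(2*a) := by positivity
  rw [abs_div, abs_pow, abs_neg, abs_one, one_pow, abs_of_pos hD]
  ring

lemma zetaA_val (a : ℕ) (ha : 1 ≤ a) :
    zetaA (2*a) = ∑' m : ℕ, (-1:ℝ)^(m+1)/((m:ℝ)+1)^(2*a) := by
  unfold zetaA
  rw [if_neg (by omega)]
  apply Tendsto.limUnder_eq
  exact (summable_alt a ha).hasSum.tendsto_sum_nat

theorem HstarN_eq' (a : ℕ) (ha : 1 ≤ a) :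
    HstarN a = -2 * zetaA (2*a) := by
  have h1 : Tendsto (fun n => T a n) atTop (𝓝 (HstarN a)) := tendsto_T a
  have h2 : Tendsto (fun n => T a n) atTop
      (𝓝 (∑' m : ℕ, 2 * ((-1:ℝ)^m/((m:ℝ)+1)^(2*a)))) := by
    apply (tendsto_fS a ha).congr
    intro n
    rw [tsum_fS a n, ← T_key a ha n]
  have hL : HstarN a = ∑' m : ℕ, 2 * ((-1:ℝ)^m/((m:ℝ)+1)^(2*a)) :=
    tendsto_nhds_unique h1 h2
  rw [hL, zetaA_val a ha, ← tsum_mul_left]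
  apply tsum_congr
  intro m
  rw [pow_succ]
  ring


end AuxHstarNEq

theorem HstarN_eq (a : ℕ) (ha : 1 ≤ a) :
    HstarN a = -2 * zetaA (2*a) := HstarN_eq' a ha
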